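/- Let u > 0, x ∈ ℝ, a ∈ ℝ \ {0}, and let (B_s)_{s≥0} be a standard one-dimensional Brownian motion starting from x with respect to a filtration (F_s)_{s≥0}. Then the process (exp(a²s/2) · φ_a(B_s, s + u))_{s≥0} is a true martingale with respect to (F_s): each exp(a²s/2)·φ_a(B_s, s+u) is integrable and E[exp(a²s'/2)·φ_a(B_{s'}, s' + u) | F_s] = exp(a²s/2)·φ_a(B_s, s + u) almost surely for all 0 ≤ s ≤ s'. -/

import Mathlib

open Real Filter

/-- For `a ≠ 0`, the function `φ_a(x,t) = (π / sinh(aπ)) Σ_{k ∈ ℤ} sin(ax + 2kat) e^{−2(kx + k²t)}`. -/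
noncomputable def phi (a x t : ℝ) : ℝ :=
  (Real.pi / Real.sinh (a * Real.pi)) *
    ∑' k : ℤ, Real.sin (a * x + 2 * (k : ℝ) * a * t) * Real.exp (-2 * ((k : ℝ) * x + (k : ℝ) ^ 2 * t))

/-- The function `φ_0(x,t) = Σ_{k ∈ ℤ} (x + 2kt) e^{−2(kx + k²t)}`. -/
noncomputable def phi0 (x t : ℝ) : ℝ :=
  ∑' k : ℤ, (x + 2 * (k : ℝ) * t) * Real.exp (-2 * ((k : ℝ) * x + (k : ℝ) ^ 2 * t))

/-- `φ_a` for all `a ∈ ℝ`, with `φ_0` as the value at `a = 0`. -/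
noncomputable def phiA (a x t : ℝ) : ℝ := if a = 0 then phi0 x t else phi a x t

open MeasureTheory ProbabilityTheory
open scoped NNReal
open scoped ENNReal

section Helpers

/-- Complex exponential integral against a Gaussian. -/
lemma phiM.gauss_cexp (l : ℂ) (v : ℝ≥0) :
    Integrable (fun y : ℝ => Complex.exp (l * y)) (gaussianReal 0 v) ∧
    ∫ y : ℝ, Complex.exp (l * y) ∂(gaussianReal 0 v) = Complex.exp (l ^ 2 * v / 2) := by
  have hcont : Continuous (fun y : ℝ => Complex.exp (l * y)) := by fun_prop
  rcases eq_or_ne v 0 with hv | hv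
  · subst hv
    rw [gaussianReal_zero_var]
    refine ⟨⟨hcont.aestronglyMeasurable, ?_⟩, ?_⟩
    · rw [HasFiniteIntegral, lintegral_dirac]
      exact ENNReal.coe_lt_top
    · rw [integral_dirac]; simp
  · have hv' : (0:ℝ) < v := by positivity
    rw [gaussianReal_of_var_ne_zero _ hv]
    have hmeas : Measurable (fun x : ℝ => (gaussianPDFReal 0 v x).toNNReal) :=
      (measurable_gaussianPDFReal 0 v).real_toNNReal
    have hd : gaussianPDF 0 v = fun x => ((gaussianPDFReal 0 v x).toNNReal : ℝ≥0∞) := by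
      funext y; simp [gaussianPDF, ENNReal.ofReal]
    have hb : (-(1/(2*(v:ℂ)))).re < 0 := by
      have : (2*(v:ℂ)) = ((2*v : ℝ) : ℂ) := by push_cast; ring
      rw [this, show (1:ℂ)/((2*v:ℝ):ℂ) = (((1/(2*v) : ℝ)):ℂ) by push_cast; ring]
      simp only [Complex.neg_re, Complex.ofReal_re]
      rw [neg_lt_zero]
      positivity
    have key : ∀ y : ℝ, (gaussianPDFReal 0 v y) • Complex.exp (l * y)
        = (Real.sqrt (2 * π * v) : ℂ)⁻¹ * Complex.exp (-(1/(2*(v:ℂ))) * y^2 + l * y + 0) := by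
      intro y
      rw [gaussianPDFReal]
      rw [Complex.real_smul]
      push_cast
      rw [mul_assoc, ← Complex.exp_add]
      have hvne : (v:ℂ) ≠ 0 := by simpa using hv
      congr 2
      field_simp
      ring
    constructor
    · rw [hd, integrable_withDensity_iff_integrable_coe_smul hmeas]
      have H : Integrable (fun y : ℝ => (Real.sqrt (2 * π * v) : ℂ)⁻¹ *
          Complex.exp (-(1/(2*(v:ℂ))) * y^2 + l * y + 0)) volume :=
        (integrable_cexp_quadratic' hb l 0).const_mul _
      refine H.congr (Filter.Eventually.of_forall fun y => ?_)
      show _ = (((gaussianPDFReal 0 v y).toNNReal : ℝ)) • Complex.exp (l * y)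
      rw [Real.coe_toNNReal _ (gaussianPDFReal_nonneg _ _ _)]
      exact (key y).symm
    · rw [hd, integral_withDensity_eq_integral_smul hmeas]
      have h3 : ∀ y : ℝ, ((gaussianPDFReal 0 v y).toNNReal : ℝ≥0) • Complex.exp (l * y)
          = (Real.sqrt (2 * π * v) : ℂ)⁻¹ * Complex.exp (-(1/(2*(v:ℂ))) * y^2 + l * y + 0) := by
        intro y
        rw [NNReal.smul_def, Real.coe_toNNReal _ (gaussianPDFReal_nonneg _ _ _)]
        exact key y
      simp_rw [h3]
      rw [integral_const_mul, integral_cexp_quadratic hb l 0]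
      have hvne : (v:ℂ) ≠ 0 := by simpa using hv
      have h1 : ((π : ℂ) / -(-(1/(2*(v:ℂ))))) = ((2 * π * v : ℝ) : ℂ) := by
        push_cast; field_simp
      rw [h1]
      have h2 : ((2 * π * v : ℝ) : ℂ) ^ (1/2 : ℂ) = (Real.sqrt (2 * π * v) : ℂ) := by
        rw [show (1/2 : ℂ) = ((1/2 : ℝ) : ℂ) by norm_num]
        rw [← Complex.ofReal_cpow (by positivity)]
        rw [Real.sqrt_eq_rpow]
      rw [h2, ← mul_assoc, inv_mul_cancel₀ (by
        simp only [ne_eq, Complex.ofReal_eq_zero]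
        positivity), one_mul]
      congr 1
      field_simp
      ring

/-- Real exponential integral against a Gaussian. -/
lemma phiM.gauss_rexp (c : ℝ) (v : ℝ≥0) :
    Integrable (fun y : ℝ => Real.exp (c * y)) (gaussianReal 0 v) ∧
    ∫ y : ℝ, Real.exp (c * y) ∂(gaussianReal 0 v) = Real.exp (c ^ 2 * v / 2) := by
  obtain ⟨hint, hval⟩ := phiM.gauss_cexp (c : ℂ) v
  have hre : ∀ y : ℝ, Real.exp (c * y) = ‖Complex.exp ((c:ℂ) * y)‖ := by
    intro y
    rw [Complex.norm_exp]
    norm_num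
  constructor
  · exact hint.norm.congr (Filter.Eventually.of_forall fun y => (hre y).symm)
  · have h1 : ∀ y : ℝ, Real.exp (c * y) = (Complex.exp ((c:ℂ) * y)).re := by
      intro y
      rw [show ((c:ℂ) * (y:ℝ)) = ((c * y : ℝ) : ℂ) by push_cast; ring, Complex.exp_ofReal_re]
    simp_rw [h1]
    have h2 : ∫ y : ℝ, (Complex.exp ((c:ℂ)*y)).re ∂(gaussianReal 0 v)
        = (∫ y : ℝ, Complex.exp ((c:ℂ)*y) ∂(gaussianReal 0 v)).re := integral_re hint
    rw [h2, hval, show ((c:ℂ)^2 * (v:ℝ) / 2) = (((c^2 * v / 2 : ℝ)) : ℂ) by push_cast; ring,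
      Complex.exp_ofReal_re]

lemma phiM.summable_nat_exp (b c : ℝ) (hb : 0 < b) :
    Summable (fun n : ℕ => Real.exp (-b * (n:ℝ)^2 + c * n)) := by
  apply summable_of_ratio_norm_eventually_le (r := Real.exp (-b)) (by
    rw [Real.exp_lt_one_iff]; linarith)
  filter_upwards [Filter.eventually_ge_atTop (Nat.ceil (c / (2*b)))] with n hn
  have hn' : c / (2*b) ≤ (n:ℝ) := le_trans (Nat.le_ceil _) (by exact_mod_cast hn)
  have hcn : c ≤ 2*b*n := by
    rw [div_le_iff₀ (by positivity)] at hn'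
    linarith
  rw [Real.norm_eq_abs, Real.norm_eq_abs, abs_of_pos (Real.exp_pos _), abs_of_pos (Real.exp_pos _),
    ← Real.exp_add, Real.exp_le_exp]
  push_cast
  nlinarith

lemma phiM.summable_int_exp (b c : ℝ) (hb : 0 < b) :
    Summable (fun k : ℤ => Real.exp (-b * (k:ℝ)^2 + c * k)) := by
  apply Summable.of_nat_of_neg
  · exact (phiM.summable_nat_exp b c hb).congr (fun n => by push_cast; ring_nf)
  · exact (phiM.summable_nat_exp b (-c) hb).congr (fun n => by push_cast; ring_nf)

/-- Transfer of integrability/integrals through an image measure. -/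
lemma phiM.map_transfer {Ω : Type*} [MeasurableSpace Ω] {P : Measure Ω} {D : Ω → ℝ}
    {ν : Measure ℝ} (hD : Measurable D) (hmap : Measure.map D P = ν)
    {E : Type*} [NormedAddCommGroup E] [NormedSpace ℝ E]
    {f : ℝ → E} (hf : Continuous f) (hint : Integrable f ν) :
    Integrable (fun ω => f (D ω)) P ∧ ∫ ω, f (D ω) ∂P = ∫ y, f y ∂ν := by
  subst hmap
  constructor
  · exact (integrable_map_measure hf.aestronglyMeasurable hD.aemeasurable).mp hint
  · exact (integral_map hD.aemeasurable hf.aestronglyMeasurable).symm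


/-- Measurability of an everywhere-summable series of measurable functions. -/
lemma phiM.measurable_tsum_of_summable {α : Type*} [MeasurableSpace α] {ι : Type*} [Countable ι]
    {f : ι → α → ℝ} (h : ∀ i, Measurable (f i)) (hsum : ∀ a, Summable fun i => f i a) :
    Measurable fun a => ∑' i, f i a := by
  refine measurable_of_tendsto_metrizable' (atTop : Filter (Finset ι))
    (f := fun t a => ∑ i ∈ t, f i a) (fun t => t.measurable_sum (fun i _ => h i)) ?_
  rw [tendsto_pi_nhds]
  intro a
  exact (hsum a).hasSum


/-- Integrability of a series with bounded L¹ norms. -/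
lemma phiM.integrable_tsum_of_bound {α : Type*} [MeasurableSpace α] {μ : Measure α}
    {ι : Type*} [Countable ι]
    {f : ι → α → ℝ} (hmeas : ∀ i, Measurable (f i))
    (hsum : ∀ a, Summable fun i => ‖f i a‖)
    {N : ι → ℝ} (hN : Summable N) (hN0 : ∀ i, 0 ≤ N i)
    (hbound : ∀ i, ∫⁻ a, ‖f i a‖₊ ∂μ ≤ ENNReal.ofReal (N i)) :
    Integrable (fun a => ∑' i, f i a) μ := by
  have hm : Measurable fun a => ∑' i, f i a :=
    phiM.measurable_tsum_of_summable hmeas (fun a => (hsum a).of_norm)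
  refine ⟨hm.aestronglyMeasurable, ?_⟩
  have step1 : ∀ a, (‖∑' i, f i a‖₊ : ℝ≥0∞) ≤ ∑' i, (‖f i a‖₊ : ℝ≥0∞) := by
    intro a
    calc (‖∑' i, f i a‖₊ : ℝ≥0∞) = ENNReal.ofReal ‖∑' i, f i a‖ :=
          (ofReal_norm _).symm
      _ ≤ ENNReal.ofReal (∑' i, ‖f i a‖) :=
          ENNReal.ofReal_le_ofReal (norm_tsum_le_tsum_norm (hsum a))
      _ = ∑' i, ENNReal.ofReal ‖f i a‖ :=
          ENNReal.ofReal_tsum_of_nonneg (fun i => norm_nonneg _) (hsum a)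
      _ = ∑' i, (‖f i a‖₊ : ℝ≥0∞) := by
          simp only [ofReal_norm, enorm_eq_nnnorm]
  rw [HasFiniteIntegral]
  calc ∫⁻ a, ‖∑' i, f i a‖₊ ∂μ ≤ ∫⁻ a, ∑' i, (‖f i a‖₊ : ℝ≥0∞) ∂μ := lintegral_mono step1
    _ = ∑' i, ∫⁻ a, ‖f i a‖₊ ∂μ :=
        lintegral_tsum (fun i => (hmeas i).enorm.aemeasurable)
    _ ≤ ∑' i, ENNReal.ofReal (N i) := ENNReal.tsum_le_tsum hbound
    _ = ENNReal.ofReal (∑' i, N i) := (ENNReal.ofReal_tsum_of_nonneg hN0 hN).symm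
    _ < ⊤ := ENNReal.ofReal_lt_top
end Helpers

theorem phi_martingale {Ω : Type*} [m : MeasurableSpace Ω] {P : Measure Ω}
    [IsProbabilityMeasure P] (F : Filtration ℝ≥0 m) (B : ℝ≥0 → Ω → ℝ) (x u : ℝ) (hu : 0 < u)
    (a : ℝ) (ha : a ≠ 0)
    (hadapted : Adapted F B)
    (hcont : ∀ᵐ ω ∂P, Continuous fun s : ℝ≥0 => B s ω)
    (hstart : ∀ᵐ ω ∂P, B 0 ω = x)
    (hgauss : ∀ s s' : ℝ≥0, s ≤ s' →
      Measure.map (fun ω => B s' ω - B s ω) P = gaussianReal 0 (s' - s))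
    (hindep : ∀ s s' : ℝ≥0, s ≤ s' →
      Indep (MeasurableSpace.comap (fun ω => B s' ω - B s ω) Real.measurableSpace) (F s) P) :
    (∀ s : ℝ≥0, Integrable
      (fun ω => Real.exp (a ^ 2 * (s : ℝ) / 2) * phi a (B s ω) ((s : ℝ) + u)) P) ∧
    Martingale
      (fun (s : ℝ≥0) (ω : Ω) => Real.exp (a ^ 2 * (s : ℝ) / 2) * phi a (B s ω) ((s : ℝ) + u))
      F P := by
  classical
  set C : ℝ := Real.pi / Real.sinh (a * Real.pi) with hC
  -- basic measurability
  have hBmF : ∀ s : ℝ≥0, Measurable[F s] (B s) := fun s => hadapted s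
  have hBm : ∀ s : ℝ≥0, Measurable (B s) := fun s => (hBmF s).mono (F.le s) le_rfl
  -- the complex building blocks
  set L : ℤ → ℂ := fun k => (a : ℂ) * Complex.I - 2 * (k:ℂ) with hL
  set g : ℤ → ℝ → ℝ → ℂ := fun k s b =>
    Complex.exp (L k * (b:ℂ) - (L k)^2 * (s:ℂ)/2 + (2*(k:ℂ)*(a:ℂ)*Complex.I - 2*(k:ℂ)^2) * (u:ℂ))
    with hgdef
  -- real and imaginary parts of the exponent
  have hz : ∀ (k : ℤ) (s b : ℝ),
      (L k * (b:ℂ) - (L k)^2 * (s:ℂ)/2 + (2*(k:ℂ)*(a:ℂ)*Complex.I - 2*(k:ℂ)^2) * (u:ℂ))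
      = ((a^2*s/2 + (-2*((k:ℝ)*b + (k:ℝ)^2*(s+u))) : ℝ) : ℂ)
        + ((a*b + 2*(k:ℝ)*a*(s+u) : ℝ) : ℂ) * Complex.I := by
    intro k s b
    simp only [hL]
    push_cast
    ring_nf
    rw [Complex.I_sq]
    ring
  have him : ∀ (k : ℤ) (s b : ℝ), (g k s b).im
      = Real.exp (a^2*s/2) *
        (Real.sin (a*b + 2*(k:ℝ)*a*(s+u)) * Real.exp (-2*((k:ℝ)*b + (k:ℝ)^2*(s+u)))) := by
    intro k s b
    show (Complex.exp _).im = _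
    rw [hz k s b, Complex.exp_im]
    simp only [Complex.add_re, Complex.add_im, Complex.ofReal_re, Complex.ofReal_im,
      Complex.mul_re, Complex.mul_im, Complex.I_re, Complex.I_im, mul_zero, mul_one, zero_mul,
      sub_zero, zero_add, add_zero, zero_sub, neg_zero]
    rw [Real.exp_add]
    ring
  have hnorm : ∀ (k : ℤ) (s b : ℝ), ‖g k s b‖
      = Real.exp (a^2*s/2 - 2*(k:ℝ)^2*(s+u)) * Real.exp (-(2*(k:ℝ))*b) := by
    intro k s b
    show ‖Complex.exp _‖ = _
    rw [hz k s b, Complex.norm_exp]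
    simp only [Complex.add_re, Complex.ofReal_re, Complex.ofReal_im,
      Complex.mul_re, Complex.I_re, Complex.I_im, mul_zero, mul_one, zero_mul, sub_zero]
    rw [← Real.exp_add]
    ring_nf
  -- pointwise summability facts
  have hpos : ∀ s : ℝ≥0, (0:ℝ) < (s:ℝ) + u := fun s => by positivity
  have hgsum : ∀ (s : ℝ≥0) (b : ℝ), Summable fun k : ℤ => ‖g k (s:ℝ) b‖ := by
    intro s b
    refine ((phiM.summable_int_exp (2*((s:ℝ)+u)) (-2*b) (by positivity)).mul_left
      (Real.exp (a^2*(s:ℝ)/2))).congr (fun k => ?_)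
    rw [hnorm, ← Real.exp_add, ← Real.exp_add]
    congr 1
    ring
  have hImsum : ∀ (s : ℝ≥0) (b : ℝ), Summable fun k : ℤ => ‖(g k (s:ℝ) b).im‖ := by
    intro s b
    refine (hgsum s b).of_nonneg_of_le (fun k => norm_nonneg _) (fun k => ?_)
    rw [Real.norm_eq_abs]
    exact Complex.abs_im_le_norm _
  -- measurability of the building blocks
  have hgmb : ∀ (k : ℤ) (t : ℝ), Measurable (fun b : ℝ => g k t b) := by
    intro k t
    apply Continuous.measurable
    apply Complex.continuous_exp.comp
    fun_prop
  have hψm : ∀ (k : ℤ) (s : ℝ≥0), Measurable (fun ω => g k (s:ℝ) (B s ω)) :=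
    fun k s => (hgmb k (s:ℝ)).comp (hBm s)
  have hImm : ∀ (k : ℤ) (s : ℝ≥0), Measurable (fun ω => (g k (s:ℝ) (B s ω)).im) :=
    fun k s => Complex.measurable_im.comp (hψm k s)
  -- the L¹ norms
  set N : ℝ≥0 → ℤ → ℝ := fun s k =>
    Real.exp (a^2*(s:ℝ)/2 - 2*(k:ℝ)*x - 2*(k:ℝ)^2*u) with hNdef
  have hNsum : ∀ s : ℝ≥0, Summable (N s) := by
    intro s
    refine ((phiM.summable_int_exp (2*u) (-2*x) (by positivity)).mul_left
      (Real.exp (a^2*(s:ℝ)/2))).congr (fun k => ?_)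
    rw [hNdef, ← Real.exp_add]
    congr 1
    ring
  have hD : ∀ s : ℝ≥0, Measurable (fun ω => B s ω - B 0 ω) := fun s => (hBm s).sub (hBm 0)
  have hmap0 : ∀ s : ℝ≥0, Measure.map (fun ω => B s ω - B 0 ω) P = gaussianReal 0 s := by
    intro s
    simpa using hgauss 0 s zero_le
  have hnormint : ∀ (s : ℝ≥0) (k : ℤ), Integrable (fun ω => ‖g k (s:ℝ) (B s ω)‖) P ∧
      ∫ ω, ‖g k (s:ℝ) (B s ω)‖ ∂P = N s k := by
    intro s k
    set c1 : ℝ := Real.exp (a^2*(s:ℝ)/2 - 2*(k:ℝ)^2*((s:ℝ)+u)) * Real.exp (-(2*(k:ℝ))*x)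
      with hc1
    have hcont : Continuous (fun y : ℝ => c1 * Real.exp (-(2*(k:ℝ))*y)) := by fun_prop
    have hint : Integrable (fun y : ℝ => c1 * Real.exp (-(2*(k:ℝ))*y)) (gaussianReal 0 s) :=
      ((phiM.gauss_rexp (-(2*(k:ℝ))) s).1).const_mul _
    obtain ⟨hI, hV⟩ := phiM.map_transfer (hD s) (hmap0 s) hcont hint
    have hkey : ∀ b : ℝ, ‖g k (s:ℝ) b‖ = c1 * Real.exp (-(2*(k:ℝ))*(b - x)) := by
      intro b
      rw [hnorm, hc1]
      simp only [← Real.exp_add]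
      congr 1
      ring
    have hae : (fun ω => ‖g k (s:ℝ) (B s ω)‖) =ᵐ[P]
        (fun ω => c1 * Real.exp (-(2*(k:ℝ))*(B s ω - B 0 ω))) := by
      filter_upwards [hstart] with ω h0
      rw [hkey, h0]
    constructor
    · exact hI.congr hae.symm
    · rw [integral_congr_ae hae, hV, integral_const_mul, (phiM.gauss_rexp (-(2*(k:ℝ))) s).2,
        hNdef, hc1]
      simp only [← Real.exp_add]
      congr 1
      ring
  have hψint : ∀ (s : ℝ≥0) (k : ℤ), Integrable (fun ω => g k (s:ℝ) (B s ω)) P := by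
    intro s k
    exact Integrable.mono' (hnormint s k).1 (hψm k s).aestronglyMeasurable
      (Eventually.of_forall fun ω => le_rfl)
  have hlint_bound : ∀ (s : ℝ≥0) (k : ℤ),
      ∫⁻ ω, ‖(g k (s:ℝ) (B s ω)).im‖₊ ∂P ≤ ENNReal.ofReal (N s k) := by
    intro s k
    have h1 : ∀ ω : Ω, (‖(g k (s:ℝ) (B s ω)).im‖₊ : ℝ≥0∞) ≤ ‖g k (s:ℝ) (B s ω)‖₊ := by
      intro ω
      rw [ENNReal.coe_le_coe, ← NNReal.coe_le_coe, coe_nnnorm, coe_nnnorm,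
        Real.norm_eq_abs]
      exact Complex.abs_im_le_norm _
    calc ∫⁻ ω, ‖(g k (s:ℝ) (B s ω)).im‖₊ ∂P ≤ ∫⁻ ω, ‖g k (s:ℝ) (B s ω)‖₊ ∂P :=
          lintegral_mono h1
      _ = ENNReal.ofReal (∫ ω, ‖g k (s:ℝ) (B s ω)‖ ∂P) :=
          (ofReal_integral_norm_eq_lintegral_enorm (hψint s k)).symm
      _ = ENNReal.ofReal (N s k) := by rw [(hnormint s k).2]
  -- the pointwise identity with the complex series
  have hpt : ∀ (s : ℝ≥0) (ω : Ω), Real.exp (a^2*(s:ℝ)/2) * phi a (B s ω) ((s:ℝ)+u)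
      = C * ∑' k : ℤ, (g k (s:ℝ) (B s ω)).im := by
    intro s ω
    simp only [phi]
    rw [← hC]
    rw [show (∑' k : ℤ, (g k (s:ℝ) (B s ω)).im)
        = ∑' k : ℤ, Real.exp (a^2*(s:ℝ)/2) *
          (Real.sin (a*(B s ω) + 2*(k:ℝ)*a*((s:ℝ)+u)) *
            Real.exp (-2*((k:ℝ)*(B s ω) + (k:ℝ)^2*((s:ℝ)+u))))
        from tsum_congr fun k => him k (s:ℝ) (B s ω)]
    rw [tsum_mul_left]
    ring
  -- integrability of the process
  have hGint : ∀ s : ℝ≥0, Integrable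
      (fun ω => Real.exp (a^2*(s:ℝ)/2) * phi a (B s ω) ((s:ℝ)+u)) P := by
    intro s
    have h1 : Integrable (fun ω => ∑' k : ℤ, (g k (s:ℝ) (B s ω)).im) P :=
      phiM.integrable_tsum_of_bound (fun k => hImm k s)
        (fun ω => hImsum s (B s ω)) (hNsum s) (fun k => (Real.exp_pos _).le)
        (fun k => hlint_bound s k)
    exact (h1.const_mul C).congr (Eventually.of_forall fun ω => (hpt s ω).symm)
  -- strong measurability w.r.t. the filtration
  have hSM : ∀ s : ℝ≥0, StronglyMeasurable[F s]
      (fun ω => Real.exp (a^2*(s:ℝ)/2) * phi a (B s ω) ((s:ℝ)+u)) := by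
    intro s
    have hsummand : ∀ b : ℝ, Summable fun k : ℤ =>
        Real.sin (a*b + 2*(k:ℝ)*a*((s:ℝ)+u)) * Real.exp (-2*((k:ℝ)*b + (k:ℝ)^2*((s:ℝ)+u))) := by
      intro b
      apply Summable.of_norm_bounded
        (phiM.summable_int_exp (2*((s:ℝ)+u)) (-2*b) (by positivity))
      intro k
      rw [norm_mul, Real.norm_eq_abs, Real.norm_eq_abs, abs_of_pos (Real.exp_pos _)]
      calc |Real.sin (a*b + 2*(k:ℝ)*a*((s:ℝ)+u))| * Real.exp (-2*((k:ℝ)*b + (k:ℝ)^2*((s:ℝ)+u)))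
          ≤ 1 * Real.exp (-2*((k:ℝ)*b + (k:ℝ)^2*((s:ℝ)+u))) := by
            gcongr
            exact Real.abs_sin_le_one _
        _ = Real.exp (-(2*((s:ℝ)+u)) * (k:ℝ)^2 + (-2*b) * (k:ℝ)) := by
            rw [one_mul]
            congr 1
            ring
    have hphimeas : Measurable (fun b : ℝ => phi a b ((s:ℝ)+u)) := by
      simp only [phi]
      exact (phiM.measurable_tsum_of_summable
        (fun k => by fun_prop) hsummand).const_mul _
    have hm1 : Measurable (fun b : ℝ => Real.exp (a^2*(s:ℝ)/2) * phi a b ((s:ℝ)+u)) :=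
      hphimeas.const_mul _
    exact (hm1.comp (hBmF s)).stronglyMeasurable
  -- the set-integral equality
  have hset : ∀ (s s' : ℝ≥0), s ≤ s' → ∀ A : Set Ω, MeasurableSet[F s] A →
      ∫ ω in A, Real.exp (a^2*(s:ℝ)/2) * phi a (B s ω) ((s:ℝ)+u) ∂P
        = ∫ ω in A, Real.exp (a^2*(s':ℝ)/2) * phi a (B s' ω) ((s':ℝ)+u) ∂P := by
    intro s s' hss' A hA
    have hA' : MeasurableSet A := F.le s A hA
    have hrw : ∀ σ : ℝ≥0, ∫ ω in A, Real.exp (a^2*(σ:ℝ)/2) * phi a (B σ ω) ((σ:ℝ)+u) ∂P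
        = C * ∑' k : ℤ, ∫ ω in A, (g k (σ:ℝ) (B σ ω)).im ∂P := by
      intro σ
      simp_rw [hpt σ]
      rw [integral_const_mul]
      congr 1
      rw [integral_tsum (fun k => ((hImm k σ).aestronglyMeasurable).restrict) ?_]
      apply ne_of_lt
      calc ∑' k : ℤ, ∫⁻ ω in A, ‖(g k (σ:ℝ) (B σ ω)).im‖₊ ∂P
          ≤ ∑' k : ℤ, ∫⁻ ω, ‖(g k (σ:ℝ) (B σ ω)).im‖₊ ∂P :=
            ENNReal.tsum_le_tsum (fun k => lintegral_mono' Measure.restrict_le_self le_rfl)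
        _ ≤ ∑' k : ℤ, ENNReal.ofReal (N σ k) := ENNReal.tsum_le_tsum (fun k => hlint_bound σ k)
        _ = ENNReal.ofReal (∑' k : ℤ, N σ k) :=
            (ENNReal.ofReal_tsum_of_nonneg (fun k => (Real.exp_pos _).le) (hNsum σ)).symm
        _ < ⊤ := ENNReal.ofReal_lt_top
    rw [hrw s, hrw s']
    congr 1
    apply tsum_congr
    intro k
    -- per-k martingale identity via independence
    set τr : ℝ := ((s' - s : ℝ≥0) : ℝ) with hτr
    have hτ : ((s':ℝ≥0):ℝ) = (s:ℝ) + τr := by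
      rw [hτr, NNReal.coe_sub hss']
      ring
    set Δ : Ω → ℝ := fun ω => B s' ω - B s ω with hΔdef
    have hΔm : Measurable Δ := (hBm s').sub (hBm s)
    set eb : ℝ → ℂ := fun y => Complex.exp (L k * y - (L k)^2 * (τr:ℂ)/2) with hebdef
    have hebc : Continuous eb := by
      apply Complex.continuous_exp.comp
      fun_prop
    have heq : ∀ y : ℝ, eb y
        = Complex.exp (L k * y) * Complex.exp (-((L k)^2 * (τr:ℂ)/2)) := by
      intro y
      rw [hebdef, ← Complex.exp_add]
      ring_nf
    have hebint : Integrable eb (gaussianReal 0 (s' - s)) := by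
      refine (((phiM.gauss_cexp (L k) (s' - s)).1).mul_const _).congr
        (Eventually.of_forall fun y => (heq y).symm)
    have hebval : ∫ y : ℝ, eb y ∂(gaussianReal 0 (s' - s)) = 1 := by
      simp_rw [heq]
      rw [integral_mul_const, (phiM.gauss_cexp (L k) (s' - s)).2, ← Complex.exp_add,
        show (L k)^2 * (((s' - s : ℝ≥0)):ℝ) / 2 + -((L k)^2 * (τr:ℂ)/2) = 0 from by
          rw [hτr]; push_cast; ring]
      exact Complex.exp_zero
    obtain ⟨hEint, hEval⟩ := phiM.map_transfer hΔm (hgauss s s' hss') hebc hebint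
    have hEval1 : ∫ ω, eb (Δ ω) ∂P = 1 := hEval.trans hebval
    have hsplit : ∀ ω : Ω, g k ((s':ℝ≥0):ℝ) (B s' ω) = g k ((s:ℝ≥0):ℝ) (B s ω) * eb (Δ ω) := by
      intro ω
      rw [hgdef, hebdef]
      show Complex.exp _ = Complex.exp _ * Complex.exp _
      rw [← Complex.exp_add]
      congr 1
      rw [hτ, hΔdef]
      push_cast
      ring
    set Xre : Ω → ℝ := A.indicator (fun ω => (g k ((s:ℝ≥0):ℝ) (B s ω)).re) with hXre
    set Xim : Ω → ℝ := A.indicator (fun ω => (g k ((s:ℝ≥0):ℝ) (B s ω)).im) with hXim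
    set Yre : Ω → ℝ := fun ω => (eb (Δ ω)).re with hYre
    set Yim : Ω → ℝ := fun ω => (eb (Δ ω)).im with hYim
    have hXrem : Measurable[F s] Xre :=
      ((Complex.measurable_re.comp ((hgmb k (s:ℝ)).comp (hBmF s)))).indicator hA
    have hXimm : Measurable[F s] Xim :=
      ((Complex.measurable_im.comp ((hgmb k (s:ℝ)).comp (hBmF s)))).indicator hA
    have hYrem : Measurable[MeasurableSpace.comap Δ Real.measurableSpace] Yre :=
      (Complex.measurable_re.comp hebc.measurable).comp (Measurable.of_comap_le le_rfl)
    have hYimm : Measurable[MeasurableSpace.comap Δ Real.measurableSpace] Yim :=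
      (Complex.measurable_im.comp hebc.measurable).comp (Measurable.of_comap_le le_rfl)
    have hIndep := hindep s s' hss'
    have hIndep1 : IndepFun Xre Yim P :=
      (indep_of_indep_of_le_right (indep_of_indep_of_le_left hIndep hYimm.comap_le)
        hXrem.comap_le).symm
    have hIndep2 : IndepFun Xim Yre P :=
      (indep_of_indep_of_le_right (indep_of_indep_of_le_left hIndep hYrem.comap_le)
        hXimm.comap_le).symm
    have hXreint : Integrable Xre P := ((hψint s k).re).indicator hA'
    have hXimint : Integrable Xim P := ((hψint s k).im).indicator hA'
    have hYreint : Integrable Yre P := hEint.re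
    have hYimint : Integrable Yim P := hEint.im
    have hP1 : Integrable (Xre * Yim) P := hIndep1.integrable_mul hXreint hYimint
    have hP2 : Integrable (Xim * Yre) P := hIndep2.integrable_mul hXimint hYreint
    have hptwise : ∀ ω : Ω, A.indicator (fun ω' => (g k ((s':ℝ≥0):ℝ) (B s' ω')).im) ω
        = Xre ω * Yim ω + Xim ω * Yre ω := by
      intro ω
      by_cases hω : ω ∈ A
      · rw [Set.indicator_of_mem hω, hXre, hXim, Set.indicator_of_mem hω,
          Set.indicator_of_mem hω, hsplit ω, Complex.mul_im]
      · rw [Set.indicator_of_notMem hω, hXre, hXim, Set.indicator_of_notMem hω,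
          Set.indicator_of_notMem hω]
        ring
    have hYim0 : ∫ ω, Yim ω ∂P = 0 := by
      have h := integral_im hEint
      rw [hEval1] at h
      simpa [hYim] using h
    have hYre1 : ∫ ω, Yre ω ∂P = 1 := by
      have h := integral_re hEint
      rw [hEval1] at h
      simpa [hYre] using h
    have hP1' : Integrable (fun ω => Xre ω * Yim ω) P := hP1
    have hP2' : Integrable (fun ω => Xim ω * Yre ω) P := hP2
    have e1 : ∫ ω, Xre ω * Yim ω ∂P = (∫ ω, Xre ω ∂P) * (∫ ω, Yim ω ∂P) :=
      hIndep1.integral_fun_mul_eq_mul_integral hXreint.aestronglyMeasurable hYimint.aestronglyMeasurable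
    have e2 : ∫ ω, Xim ω * Yre ω ∂P = (∫ ω, Xim ω ∂P) * (∫ ω, Yre ω ∂P) :=
      hIndep2.integral_fun_mul_eq_mul_integral hXimint.aestronglyMeasurable hYreint.aestronglyMeasurable
    calc ∫ ω in A, (g k ((s:ℝ≥0):ℝ) (B s ω)).im ∂P
        = ∫ ω, Xim ω ∂P := by rw [hXim, integral_indicator hA']
      _ = ∫ ω in A, (g k ((s':ℝ≥0):ℝ) (B s' ω)).im ∂P := by
          rw [← integral_indicator hA']
          rw [integral_congr_ae (Eventually.of_forall hptwise)]
          rw [integral_add hP1' hP2']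
          rw [e1, e2, hYim0, hYre1, mul_zero, zero_add, mul_one]
  -- conclusion
  refine ⟨hGint, ?_, ?_⟩
  · intro s
    exact hSM s
  · intro s s' hss'
    haveI : SigmaFinite (P.trim (F.le s)) := by infer_instance
    exact (ae_eq_condExp_of_forall_setIntegral_eq (F.le s) (hGint s')
      (fun A hA _ => (hGint s).integrableOn)
      (fun A hA _ => hset s s' hss' A hA)
      ((hSM s).aestronglyMeasurable)).symm
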